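/- arXiv:0704.3939 — 5 statements merged into one kernel-verified Lean document; each statement's English description precedes it below -/
import Mathlib

section
/- Let ρ = e^{2πi/3}, H = diag(1,1,1,-1), and suppose A, B ∈ GL₄(ℂ) satisfy B = H A Λ where Λ = diag(ρ, ρ², ρ², ρ²), and suppose the first column of A equals a vector x with Δ = xᵀHx ≠ 0 and A⁻¹ satisfies (Hx)_μ = A⁻¹_{1μ}Δ. Then A B⁻¹ = ρ( H - (1-ρ) x xᵀ / Δ ). -/
open Matrix Complex

noncomputable def Hm : Matrix (Fin 4) (Fin 4) ℂ := Matrix.diagonal ![1, 1, 1, -1]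

noncomputable def ρ : ℂ := Complex.exp (2 * Real.pi * Complex.I / 3)

noncomputable def Λm : Matrix (Fin 4) (Fin 4) ℂ := Matrix.diagonal ![ρ, ρ ^ 2, ρ ^ 2, ρ ^ 2]

lemma hρ3 : ρ ^ 3 = 1 := by
  rw [ρ, ← Complex.exp_nat_mul]
  rw [show (3 : ℕ) * (2 * (Real.pi : ℂ) * Complex.I / 3) = 2 * Real.pi * Complex.I by
    push_cast; ring]
  exact Complex.exp_two_pi_mul_I

theorem stmt1 (A B : Matrix (Fin 4) (Fin 4) ℂ)
    (hA : IsUnit A.det) (hB : IsUnit B.det)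
    (hBA : B = Hm * A * Λm)
    (x : Fin 4 → ℂ) (hx : ∀ i, A i 0 = x i)
    (Δ : ℂ) (hΔ : Δ = x ⬝ᵥ Hm.mulVec x) (hΔ0 : Δ ≠ 0)
    (hinv : ∀ μ, Hm.mulVec x μ = A⁻¹ 0 μ * Δ) :
    A * B⁻¹ = ρ • (Hm - ((1 - ρ) / Δ) • Matrix.vecMulVec x x) := by
  have hkey : ∀ j, ∑ k, Hm.mulVec x k * A k j = if (0 : Fin 4) = j then Δ else 0 := by
    intro j
    have h1 : ∑ k, Hm.mulVec x k * A k j = Δ * (A⁻¹ * A) 0 j := by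
      rw [Matrix.mul_apply, Finset.mul_sum]
      refine Finset.sum_congr rfl fun k _ => ?_
      rw [hinv k]; ring
    rw [h1, Matrix.nonsing_inv_mul A hA, Matrix.one_apply]
    split <;> simp
  have hmv : ∀ k, Hm.mulVec x k = (![1,1,1,(-1 : ℂ)] k) * x k := by
    intro k; rw [Hm, Matrix.mulVec_diagonal]
  suffices hC : (ρ • (Hm - ((1 - ρ) / Δ) • Matrix.vecMulVec x x)) * B = A by
    rw [← hC, mul_assoc, Matrix.mul_nonsing_inv B hB, mul_one]
  rw [hBA]
  have hHAΛ : ∀ m j, (Hm * A * Λm) m j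
      = ![1,1,1,(-1:ℂ)] m * A m j * ![ρ,ρ^2,ρ^2,ρ^2] j := by
    intro m j
    rw [Λm, Matrix.mul_diagonal, Hm, Matrix.diagonal_mul]
  have hhi : ∀ i, (![1,1,1,(-1:ℂ)] i) * (![1,1,1,(-1:ℂ)] i) = 1 := by
    intro i; fin_cases i <;> norm_num
  have hVM : ∀ i j, (Matrix.vecMulVec x x * (Hm * A * Λm)) i j
      = x i * (![ρ,ρ^2,ρ^2,ρ^2] j * (if (0 : Fin 4) = j then Δ else 0)) := by
    intro i j
    rw [Matrix.mul_apply, Fin.sum_univ_four]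
    simp only [Matrix.vecMulVec_apply, hHAΛ]
    rw [← hkey j, Fin.sum_univ_four, hmv 0, hmv 1, hmv 2, hmv 3]
    ring
  have hHM : ∀ i j, (Hm * (Hm * A * Λm)) i j
      = ![1,1,1,(-1:ℂ)] i * (![1,1,1,(-1:ℂ)] i * A i j * ![ρ,ρ^2,ρ^2,ρ^2] j) := by
    intro i j
    rw [show (Hm * (Hm * A * Λm)) i j = ![1,1,1,(-1:ℂ)] i * (Hm * A * Λm) i j from by
      rw [Hm, Matrix.diagonal_mul], hHAΛ]
  have expand : (ρ • (Hm - ((1 - ρ) / Δ) • Matrix.vecMulVec x x)) * (Hm * A * Λm)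
      = ρ • (Hm * (Hm * A * Λm))
        - (ρ * ((1 - ρ) / Δ)) • (Matrix.vecMulVec x x * (Hm * A * Λm)) := by
    rw [Matrix.smul_mul, Matrix.sub_mul, Matrix.smul_mul, smul_sub, smul_smul]
  rw [expand]
  ext i j
  rw [Matrix.sub_apply, Matrix.smul_apply, Matrix.smul_apply, smul_eq_mul, smul_eq_mul,
    hHM, hVM]
  have hh := hhi i
  fin_cases j <;>
    simp only [Fin.zero_eta, Fin.mk_one, Fin.reduceFinMk, Fin.isValue, if_true, if_false]
  · simp only [Matrix.cons_val_zero, hx i]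
    field_simp
    linear_combination (ρ^2 * x i) * hh + (x i) * hρ3
  · rw [if_neg (by decide : ¬ (0 : Fin 4) = 1)]
    simp only [Matrix.cons_val_one, Matrix.cons_val_zero, Matrix.head_cons, mul_zero, sub_zero]
    linear_combination (ρ^3 * A i 1) * hh + (A i 1) * hρ3
  · rw [if_neg (by decide : ¬ (0 : Fin 4) = 2)]
    simp only [Matrix.cons_val_two, Matrix.tail_cons, Matrix.head_cons, mul_zero, sub_zero]
    linear_combination (ρ^3 * A i 2) * hh + (A i 2) * hρ3
  · rw [if_neg (by decide : ¬ (0 : Fin 4) = 3)]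
    simp only [Matrix.cons_val_three, Matrix.tail_cons, Matrix.head_cons, mul_zero, sub_zero]
    linear_combination (ρ^3 * A i 3) * hh + (A i 3) * hρ3
end

section
/- Let t = 1/2 + 5√3/18. Then t ∈ (0,1), t^{1/3} + (1-t)^{1/3} = 2^{1/3}, i.e. α = 1/2, β = t satisfy the degree-2 signature-3 modular relation (αβ)^{1/3} + ((1-α)(1-β))^{1/3} = 1 with α = 1/2. -/
open Real

lemma cube_root_eq (x y : ℝ) (hy : 0 ≤ y) (h : y ^ (3:ℕ) = x) :
    x ^ ((1:ℝ)/3) = y := by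
  rw [← h, one_div]
  exact_mod_cast Real.pow_rpow_inv_natCast hy (by norm_num)

theorem stmt11 (t : ℝ) (ht : t = 1/2 + 5 * Real.sqrt 3 / 18) :
    t ∈ Set.Ioo (0:ℝ) 1 ∧
    t ^ ((1:ℝ)/3) + (1 - t) ^ ((1:ℝ)/3) = (2:ℝ) ^ ((1:ℝ)/3) ∧
    ((1/2) * t) ^ ((1:ℝ)/3) + ((1/2) * (1 - t)) ^ ((1:ℝ)/3) = 1 := by
  set s := Real.sqrt 3 with hs
  have hs2 : s ^ 2 = 3 := Real.sq_sqrt (by norm_num)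
  have hs0 : 0 ≤ s := Real.sqrt_nonneg 3
  have hslt : s < 9/5 := by nlinarith
  have hmem : t ∈ Set.Ioo (0:ℝ) 1 := by
    constructor <;> [skip; skip] <;> rw [ht] <;> nlinarith
  have e1 : ((1/2) * t) ^ ((1:ℝ)/3) = (3 + s) / 6 := by
    apply cube_root_eq _ _ (by nlinarith)
    rw [ht]; ring_nf; nlinarith [hs2]
  have e2 : ((1/2) * (1 - t)) ^ ((1:ℝ)/3) = (3 - s) / 6 := by
    apply cube_root_eq _ _ (by nlinarith)
    rw [ht]; ring_nf; nlinarith [hs2]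
  have key : ((1/2) * t) ^ ((1:ℝ)/3) + ((1/2) * (1 - t)) ^ ((1:ℝ)/3) = 1 := by
    rw [e1, e2]; ring
  refine ⟨hmem, ?_, key⟩
  have h2 : t = 2 * ((1/2) * t) := by ring
  have h3 : 1 - t = 2 * ((1/2) * (1 - t)) := by ring
  have ht0 : (0:ℝ) ≤ (1/2) * t := by nlinarith [hmem.1]
  have ht1 : (0:ℝ) ≤ (1/2) * (1 - t) := by nlinarith [hmem.2]
  calc t ^ ((1:ℝ)/3) + (1 - t) ^ ((1:ℝ)/3)
      = (2 * ((1/2) * t)) ^ ((1:ℝ)/3) + (2 * ((1/2) * (1 - t))) ^ ((1:ℝ)/3) := by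
        rw [← h2, ← h3]
    _ = (2:ℝ) ^ ((1:ℝ)/3) * (((1/2) * t) ^ ((1:ℝ)/3) + ((1/2) * (1 - t)) ^ ((1:ℝ)/3)) := by
        rw [Real.mul_rpow (by norm_num) ht0, Real.mul_rpow (by norm_num) ht1]; ring
    _ = (2:ℝ) ^ ((1:ℝ)/3) := by rw [key, mul_one]
end

section
/- For 0 < z < 1, ₂F₁(1/2,1/2;1;z) = (1+√z)^{-1} · ₂F₁(1/2,1/2;1; 4√z/(1+√z)²). -/
open Real

/-- Gauss hypergeometric function `₂F₁(a,b;c;z)` via the Euler integral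
representation, valid for `c > b > 0` and `z < 1`. -/
noncomputable def hyp2F1 (a b c z : ℝ) : ℝ :=
  (Real.Gamma c / (Real.Gamma b * Real.Gamma (c - b))) *
    ∫ t in (0:ℝ)..1, t ^ (b - 1) * (1 - t) ^ (c - b - 1) * (1 - z * t) ^ (-a)

open MeasureTheory Set in
lemma landen_integral (k : ℝ) (hk0 : 0 < k) (hk1 : k < 1) :
    (∫ s in Ioo (0:ℝ) 1,
        s ^ (-(1/2):ℝ) * (1-s) ^ (-(1/2):ℝ) * (1 - 4*k/(1+k)^2 * s) ^ (-(1/2):ℝ))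
    = (1+k) * ∫ t in Ioo (0:ℝ) 1,
        t ^ (-(1/2):ℝ) * (1-t) ^ (-(1/2):ℝ) * (1 - k^2*t) ^ (-(1/2):ℝ) := by
  set F : ℝ → ℝ := fun s =>
    s ^ (-(1/2):ℝ) * (1-s) ^ (-(1/2):ℝ) * (1 - 4*k/(1+k)^2 * s) ^ (-(1/2):ℝ) with hF
  set φ : ℝ → ℝ := fun t => (1+k)^2 * t / (1+k*t)^2 with hφdef
  set φ' : ℝ → ℝ := fun t => (1+k)^2 * (1-k*t) / (1+k*t)^3 with hφ'def
  have hden : ∀ t : ℝ, 0 ≤ t → 0 < 1 + k*t := fun t ht => by nlinarith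
  have hderiv : ∀ t ∈ Icc (0:ℝ) 1, HasDerivAt φ (φ' t) t := by
    intro t ht
    have h1 : (0:ℝ) < 1 + k*t := hden t ht.1
    have h2 : ((1+k*t)^2 : ℝ) ≠ 0 := by positivity
    have hu : HasDerivAt (fun t : ℝ => (1+k)^2 * t) ((1+k)^2) t := by
      simpa using (hasDerivAt_id t).const_mul ((1+k)^2)
    have hv : HasDerivAt (fun t : ℝ => (1+k*t)^2) (2*(1+k*t)*k) t := by
      have : HasDerivAt (fun t : ℝ => 1+k*t) k t := by
        simpa using ((hasDerivAt_id t).const_mul k).const_add 1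
      have := this.fun_pow 2
      simpa [mul_comm, mul_assoc, mul_left_comm] using this
    have := hu.fun_div hv h2
    refine this.congr_deriv ?_
    simp only [hφ'def]
    field_simp
    ring
  have hmono : StrictMonoOn φ (Icc 0 1) := by
    apply strictMonoOn_of_deriv_pos (convex_Icc 0 1)
    · exact fun t ht => (hderiv t ht).continuousAt.continuousWithinAt
    · intro t ht
      rw [interior_Icc] at ht
      obtain ⟨ht0, ht1⟩ := ht
      rw [(hderiv t ⟨ht0.le, ht1.le⟩).deriv]
      have h1 : (0:ℝ) < 1 + k*t := hden t ht0.le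
      have h2 : k*t < 1 := by nlinarith
      have : (0:ℝ) < 1 - k*t := by linarith
      positivity
  have hφ0 : φ 0 = 0 := by simp [hφdef]
  have hφ1 : φ 1 = 1 := by
    have : ((1+k)^2 : ℝ) ≠ 0 := by positivity
    simp [hφdef, this]
  have himg : φ '' Ioo 0 1 = Ioo 0 1 := by
    apply Subset.antisymm
    · rintro s ⟨t, ht, rfl⟩
      constructor
      · rw [← hφ0]
        exact hmono (left_mem_Icc.2 zero_le_one) ⟨ht.1.le, ht.2.le⟩ ht.1
      · rw [← hφ1]
        exact hmono ⟨ht.1.le, ht.2.le⟩ (right_mem_Icc.2 zero_le_one) ht.2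
    · have := intermediate_value_Ioo (zero_le_one' ℝ)
        (fun t ht => (hderiv t ht).continuousAt.continuousWithinAt)
      rwa [hφ0, hφ1] at this
  have hinj : InjOn φ (Ioo 0 1) := hmono.injOn.mono Ioo_subset_Icc_self
  have hcov := integral_image_eq_integral_abs_deriv_smul (f := φ) (f' := φ')
    measurableSet_Ioo
    (fun t ht => (hderiv t (Ioo_subset_Icc_self ht)).hasDerivWithinAt) hinj F
  rw [himg] at hcov
  rw [hcov, ← MeasureTheory.integral_const_mul]
  apply setIntegral_congr_fun measurableSet_Ioo
  intro t ht
  obtain ⟨ht0, ht1⟩ := ht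
  have hu : (0:ℝ) < 1 + k*t := hden t ht0.le
  have hkt : k*t < 1 := by nlinarith
  have hm : (0:ℝ) < 1 - k*t := by linarith
  have h1t : (0:ℝ) < 1 - t := by linarith
  have hzt : (0:ℝ) < 1 - k^2*t := by nlinarith
  -- key algebraic facts
  have hs_pos : 0 < φ t := by
    have : (0:ℝ) < (1+k)^2 * t := by positivity
    exact div_pos this (by positivity)
  have h1s : 1 - φ t = (1-t)*(1-k^2*t) / (1+k*t)^2 := by
    simp only [hφdef]; field_simp; ring
  have hws : 1 - 4*k/(1+k)^2 * φ t = (1-k*t)^2 / (1+k*t)^2 := by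
    have h2 : ((1+k)^2 : ℝ) ≠ 0 := by positivity
    simp only [hφdef]; field_simp; ring
  have habs : |φ' t| = (1+k)^2 * (1-k*t) / (1+k*t)^3 := by
    rw [hφ'def, abs_of_pos (by positivity)]
  have hinv : ∀ x : ℝ, 0 < x → x ^ (-(1/2):ℝ) = (Real.sqrt x)⁻¹ := by
    intro x hx
    rw [Real.rpow_neg hx.le, Real.sqrt_eq_rpow]
  have hsqrt_s : Real.sqrt (φ t) = (1+k) * Real.sqrt t / (1+k*t) := by
    have : φ t = ((1+k) * Real.sqrt t / (1+k*t))^2 := by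
      rw [div_pow, mul_pow, Real.sq_sqrt ht0.le, hφdef]
    rw [this, Real.sqrt_sq (by positivity)]
  have hsqrt_1s : Real.sqrt (1 - φ t)
      = Real.sqrt (1-t) * Real.sqrt (1-k^2*t) / (1+k*t) := by
    have : 1 - φ t = (Real.sqrt (1-t) * Real.sqrt (1-k^2*t) / (1+k*t))^2 := by
      rw [div_pow, mul_pow, Real.sq_sqrt h1t.le, Real.sq_sqrt hzt.le, h1s]
    rw [this, Real.sqrt_sq (by positivity)]
  have hsqrt_ws : Real.sqrt (1 - 4*k/(1+k)^2 * φ t) = (1-k*t) / (1+k*t) := by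
    have : 1 - 4*k/(1+k)^2 * φ t = ((1-k*t)/(1+k*t))^2 := by
      rw [div_pow, hws]
    rw [this, Real.sqrt_sq (by positivity)]
  have hst : Real.sqrt t ≠ 0 := (Real.sqrt_pos.2 ht0).ne'
  have hs1t : Real.sqrt (1-t) ≠ 0 := (Real.sqrt_pos.2 h1t).ne'
  have hszt : Real.sqrt (1-k^2*t) ≠ 0 := (Real.sqrt_pos.2 hzt).ne'
  have h1s_pos : (0:ℝ) < 1 - φ t := by rw [h1s]; positivity
  have hws_pos : (0:ℝ) < 1 - 4*k/(1+k)^2 * φ t := by rw [hws]; positivity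
  simp only [smul_eq_mul, hF]
  rw [hinv _ hs_pos, hinv _ h1s_pos, hinv _ hws_pos, hinv _ ht0, hinv _ h1t,
    hinv _ hzt, hsqrt_s, hsqrt_1s, hsqrt_ws, habs]
  field_simp

open MeasureTheory Set in
theorem stmt14 (z : ℝ) (hz0 : 0 < z) (hz1 : z < 1) :
    hyp2F1 (1/2) (1/2) 1 z
      = (1 + Real.sqrt z)⁻¹ *
        hyp2F1 (1/2) (1/2) 1 (4 * Real.sqrt z / (1 + Real.sqrt z)^2) := by
  set k := Real.sqrt z with hk
  have hk0 : 0 < k := Real.sqrt_pos.2 hz0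
  have hk1 : k < 1 := by
    rw [hk, show (1:ℝ) = Real.sqrt 1 by simp]
    exact Real.sqrt_lt_sqrt hz0.le hz1
  have hzk : z = k^2 := (Real.sq_sqrt hz0.le).symm
  have key := landen_integral k hk0 hk1
  rw [hyp2F1, hyp2F1]
  have conv1 : ∀ w : ℝ, (∫ t in (0:ℝ)..1,
      t ^ ((1:ℝ)/2 - 1) * (1 - t) ^ (1 - (1:ℝ)/2 - 1) * (1 - w * t) ^ (-((1:ℝ)/2)))
      = ∫ t in Set.Ioo (0:ℝ) 1,
      t ^ (-(1/2):ℝ) * (1-t) ^ (-(1/2):ℝ) * (1 - w*t) ^ (-(1/2):ℝ) := by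
    intro w
    rw [intervalIntegral.integral_of_le zero_le_one,
      MeasureTheory.integral_Ioc_eq_integral_Ioo]
    norm_num
  rw [conv1, conv1, hzk] at *
  rw [key]
  have : (1+k) ≠ 0 := by positivity
  field_simp
  simp only [mul_comm _ (k^2)]
end

section
/- ₂F₁(1/2, 1/2; 1; (2-√3)/4) = Γ(1/6)Γ(1/3) / (3^{1/4}·2π^{3/2}). Equivalently, the complete elliptic integral K((√3-1)/(2√2)) = Γ(1/6)Γ(1/3)/(3^{1/4}·4√π). -/
open Real

open Set MeasureTheory

/- Auxiliary development: we evaluate the complete elliptic integral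
`∫ t in (0,1), t^(-1/2) (1-t)^(-1/2) (1 - z t)^(-1/2)` with `z = (2-√3)/4`
by transporting it, via an explicit degree-2 algebraic substitution (a 2-isogeny
of the underlying elliptic curves), to `3^(1/4) ∫ x in (1,∞), (x³-1)^(-1/2) dx`,
which is a Beta integral. -/

lemma s3_sq : Real.sqrt 3 ^ 2 = 3 := Real.sq_sqrt (by norm_num)

lemma s3_lt_two : Real.sqrt 3 < 2 := by
  nlinarith [s3_sq, Real.sqrt_nonneg 3]

lemma hc3 : 0 < 2*Real.sqrt 3 - 3 := by
  nlinarith [s3_sq, Real.sqrt_nonneg 3]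

lemma c3_identity : 3 = 6*(2*Real.sqrt 3-3) + (2*Real.sqrt 3-3)^2 := by
  linear_combination (-4) * s3_sq

/-- The substitution map (a 2-isogeny in algebraic form). -/
noncomputable def phiA (t : ℝ) : ℝ :=
  (3 - 2*(2*Real.sqrt 3-3)*(1-t) - (2*Real.sqrt 3-3)^2*(1-t)^2) / (4*(2*Real.sqrt 3-3)*(1-t))

noncomputable def phiA' (t : ℝ) : ℝ :=
  (3 + (2*Real.sqrt 3-3)^2*(1-t)^2) / (4*(2*Real.sqrt 3-3)*(1-t)^2)

noncomputable def GG (x : ℝ) : ℝ := (x^3 - 1) ^ (-(1/2) : ℝ)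

/-- cleared-denominator form of the key algebraic identity -/
lemma keyA_cleared (s w : ℝ) (hs : s^2 = 3) :
    ((3 - 2*(2*s-3)*w - (2*s-3)^2*w^2)^3 - 64*(2*s-3)^3*w^3) * w
      = 4*(2*s-3)*s*(3 + (2*s-3)^2*w^2)^2 *
        ((1-w)*(w*(1 - (2-s)/4*(1-w)))) := by
  linear_combination ((-9)*w + (-54)*w^2 + (-27)*w^3 + (-324)*w^4 + (81)*w^5 + (-486)*w^6 +
    (243)*w^7 + (-18)*s*w + (36)*s*w^2 + (-54)*s*w^3 + (648)*s*w^4 + (-270)*s*w^5 +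
    (1620)*s*w^6 + (-810)*s*w^7 + (120)*s^2*w^3 + (-432)*s^2*w^4 + (432)*s^2*w^5 +
    (-2160)*s^2*w^6 + (1080)*s^2*w^7 + (-48)*s^3*w^3 + (96)*s^3*w^4 + (-384)*s^3*w^5 +
    (1440)*s^3*w^6 + (-720)*s^3*w^7 + (176)*s^4*w^5 + (-480)*s^4*w^6 + (240)*s^4*w^7 +
    (-32)*s^5*w^5 + (64)*s^5*w^6 + (-32)*s^5*w^7) * hs

lemma keyA {t : ℝ} (ht0 : 0 < t) (ht1 : t < 1) :
    phiA t ^ 3 - 1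
      = Real.sqrt 3 * phiA' t ^ 2 * (t * ((1-t) * (1 - (2-Real.sqrt 3)/4 * t))) := by
  have hs := s3_sq
  have hc := hc3
  have hw : (0:ℝ) < 1 - t := by linarith
  have key := keyA_cleared (Real.sqrt 3) (1-t) hs
  unfold phiA phiA'
  have h1 : (4*(2*Real.sqrt 3-3)*(1-t))^3 ≠ 0 := by positivity
  have h2 : (4*(2*Real.sqrt 3-3)*(1-t)^2)^2 ≠ 0 := by positivity
  rw [div_pow, div_pow, div_sub_one h1]
  have h3 : Real.sqrt 3 * ((3 + (2*Real.sqrt 3-3)^2*(1-t)^2)^2 / (4*(2*Real.sqrt 3-3)*(1-t)^2)^2)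
        * (t * ((1-t) * (1 - (2-Real.sqrt 3)/4 * t)))
      = (Real.sqrt 3 * (3 + (2*Real.sqrt 3-3)^2*(1-t)^2)^2
          * (t * ((1-t) * (1 - (2-Real.sqrt 3)/4 * t)))) / (4*(2*Real.sqrt 3-3)*(1-t)^2)^2 := by
    ring
  rw [h3, div_eq_div_iff h1 h2]
  linear_combination (16*(2*Real.sqrt 3-3)^2*(1-t)^3) * key

lemma phiA_deriv {t : ℝ} (ht1 : t < 1) : HasDerivAt phiA (phiA' t) t := by
  have hc := hc3
  have hw : (0:ℝ) < 1 - t := by linarith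
  have h1 : HasDerivAt (fun x : ℝ => 1 - x) (-1) t := by
    simpa using (hasDerivAt_id t).const_sub 1
  have hn : HasDerivAt (fun x : ℝ => 3 - 2*(2*Real.sqrt 3-3)*(1-x) - (2*Real.sqrt 3-3)^2*(1-x)^2)
      (0 - 2*(2*Real.sqrt 3-3)*(-1) - (2*Real.sqrt 3-3)^2*(2*(1-t)^1*(-1))) t := by
    exact ((hasDerivAt_const t (3:ℝ)).sub ((h1.const_mul _))).sub ((h1.pow 2).const_mul _)
  have hd : HasDerivAt (fun x : ℝ => 4*(2*Real.sqrt 3-3)*(1-x)) (4*(2*Real.sqrt 3-3)*(-1)) t :=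
    h1.const_mul _
  have hdne : 4*(2*Real.sqrt 3-3)*(1-t) ≠ 0 := by positivity
  have := hn.div hd hdne
  refine this.congr_deriv ?_
  unfold phiA'
  rw [div_eq_div_iff (by positivity) (by positivity)]
  ring

lemma phiA_quad {t y : ℝ} (hw : 1 - t ≠ 0) (h : phiA t = y) :
    ((2*Real.sqrt 3-3)*(1-t))^2 + (2+4*y)*((2*Real.sqrt 3-3)*(1-t)) - 3 = 0 := by
  have hc := hc3
  unfold phiA at h
  rw [div_eq_iff (by positivity)] at h
  linear_combination -h

lemma phiA_eval {t y : ℝ} (hw : 1 - t ≠ 0)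
    (hq : ((2*Real.sqrt 3-3)*(1-t))^2 + (2+4*y)*((2*Real.sqrt 3-3)*(1-t)) - 3 = 0) :
    phiA t = y := by
  have hc := hc3
  unfold phiA
  rw [div_eq_iff (by positivity)]
  linear_combination -hq

lemma phiA_gt_one {t : ℝ} (ht0 : 0 < t) (ht1 : t < 1) : 1 < phiA t := by
  have hc := hc3
  have hw : (0:ℝ) < 1 - t := by linarith
  have h3 := c3_identity
  unfold phiA
  rw [lt_div_iff₀ (by positivity)]
  nlinarith [sq_nonneg ((2*Real.sqrt 3-3)*(1-t)), mul_pos hc hw, mul_pos (mul_pos hc hw) ht0,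
    mul_pos (mul_pos (mul_pos hc hw) (mul_pos hc hw)) ht0]

lemma phiA_pos' {t : ℝ} (ht1 : t < 1) : 0 < phiA' t := by
  have hc := hc3
  have hw : (0:ℝ) < 1 - t := by linarith
  apply div_pos <;> positivity

lemma phiA_inj : Set.InjOn phiA (Ioo 0 1) := by
  intro t1 h1 t2 h2 heq
  have hc := hc3
  have hw1 : (0:ℝ) < 1 - t1 := by linarith [h1.2]
  have hw2 : (0:ℝ) < 1 - t2 := by linarith [h2.2]
  have hy : 1 < phiA t2 := phiA_gt_one h2.1 h2.2
  have q1 := phiA_quad (ne_of_gt hw1) heq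
  have q2 := phiA_quad (ne_of_gt hw2) rfl
  have hfac : ((1-t1) - (1-t2)) *
      ((2*Real.sqrt 3-3)^2*((1-t1)+(1-t2)) + (2+4*phiA t2)*(2*Real.sqrt 3-3)) = 0 := by
    linear_combination q1 - q2
  have hpos : 0 < (2*Real.sqrt 3-3)^2*((1-t1)+(1-t2)) + (2+4*phiA t2)*(2*Real.sqrt 3-3) := by
    nlinarith
  rcases mul_eq_zero.mp hfac with h | h
  · linarith
  · linarith

lemma phiA_image : phiA '' (Ioo 0 1) = Ioi 1 := by
  have hc := hc3
  apply Set.eq_of_subset_of_subset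
  · rintro y ⟨t, ht, rfl⟩
    exact phiA_gt_one ht.1 ht.2
  · intro y hy
    have hy1 : (1:ℝ) < y := hy
    set D : ℝ := (1+2*y)^2 + 3 with hD
    have hDpos : 0 ≤ D := by positivity
    set q : ℝ := Real.sqrt D - (1+2*y) with hq
    have hq_pos : 0 < q := by
      have : 1+2*y < Real.sqrt D := by
        rw [show D = (1+2*y)^2 + 3 from rfl]
        nlinarith [Real.sq_sqrt hDpos, Real.sqrt_nonneg D]
      linarith
    have hq_sq : q^2 + 2*(1+2*y)*q - 3 = 0 := by
      have := Real.sq_sqrt hDpos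
      rw [hq]
      linear_combination this
    have hqc : q < 2*Real.sqrt 3 - 3 := by
      have h2 : Real.sqrt D < (2*Real.sqrt 3 - 3) + (1+2*y) := by
        rw [Real.sqrt_lt' (by nlinarith)]
        nlinarith [c3_identity]
      linarith
    refine ⟨1 - q/(2*Real.sqrt 3-3), ⟨by
        have : q/(2*Real.sqrt 3-3) < 1 := (div_lt_one hc).mpr hqc
        linarith, by
        have : 0 < q/(2*Real.sqrt 3-3) := div_pos hq_pos hc
        linarith⟩, ?_⟩
    apply phiA_eval
    · have : 0 < q/(2*Real.sqrt 3-3) := div_pos hq_pos hc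
      intro h
      simp only [sub_sub_cancel] at h
      rw [h] at this; linarith
    · rw [sub_sub_cancel, mul_div_cancel₀ _ (ne_of_gt hc)]
      linear_combination hq_sq

lemma rpow_half_split {A T1 T2 T3 : ℝ} (hA : 0 < A) (h1 : 0 < T1) (h2 : 0 < T2) (h3 : 0 < T3) :
    (Real.sqrt 3 * A ^ 2 * (T1 * (T2 * T3))) ^ (-(1/2) : ℝ)
      = (3:ℝ) ^ (-(1/4) : ℝ) * A⁻¹ *
        (T1 ^ (-(1/2) : ℝ) * T2 ^ (-(1/2) : ℝ) * T3 ^ (-(1/2) : ℝ)) := by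
  have hs3 : (0:ℝ) ≤ Real.sqrt 3 := Real.sqrt_nonneg 3
  rw [Real.mul_rpow (by positivity) (by positivity),
      Real.mul_rpow hs3 (by positivity),
      Real.mul_rpow h1.le (by positivity),
      Real.mul_rpow h2.le h3.le]
  have e1 : Real.sqrt 3 ^ (-(1/2) : ℝ) = (3:ℝ) ^ (-(1/4) : ℝ) := by
    rw [Real.sqrt_eq_rpow, ← Real.rpow_mul (by norm_num)]
    norm_num
  have e2 : (A ^ 2) ^ (-(1/2) : ℝ) = A⁻¹ := by
    rw [← Real.rpow_natCast A 2, ← Real.rpow_mul hA.le]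
    norm_num [Real.rpow_neg_one]
  rw [e1, e2]
  ring

lemma pointwiseA {t : ℝ} (ht0 : 0 < t) (ht1 : t < 1) :
    |phiA' t| • GG (phiA t)
      = (3:ℝ) ^ (-(1/4) : ℝ) *
        (t ^ (-(1/2) : ℝ) * (1-t) ^ (-(1/2) : ℝ) * (1 - (2-Real.sqrt 3)/4 * t) ^ (-(1/2) : ℝ)) := by
  have hA := phiA_pos' ht1
  have h1t : (0:ℝ) < 1 - t := by linarith
  have hzt : (0:ℝ) < 1 - (2-Real.sqrt 3)/4 * t := by
    nlinarith [s3_lt_two, Real.sqrt_nonneg 3]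
  rw [smul_eq_mul, abs_of_pos hA]
  unfold GG
  rw [keyA ht0 ht1, rpow_half_split hA ht0 h1t hzt]
  field_simp

lemma stepA :
    ∫ x in Ioi (1:ℝ), GG x
      = (3:ℝ) ^ (-(1/4) : ℝ) *
        ∫ t in Ioo (0:ℝ) 1,
          t ^ (-(1/2) : ℝ) * (1-t) ^ (-(1/2) : ℝ)
            * (1 - (2-Real.sqrt 3)/4 * t) ^ (-(1/2) : ℝ) := by
  rw [← phiA_image,
    integral_image_eq_integral_abs_deriv_smul measurableSet_Ioo
      (fun t ht => (phiA_deriv ht.2).hasDerivWithinAt) phiA_inj GG,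
    ← integral_const_mul]
  exact setIntegral_congr_fun measurableSet_Ioo fun t ht => pointwiseA ht.1 ht.2

noncomputable def phiB (v : ℝ) : ℝ := v ^ (-(1/3) : ℝ)

lemma phiB_inj : Set.InjOn phiB (Ioo 0 1) := by
  have : StrictAntiOn phiB (Ioo 0 1) := by
    intro a ha b hb hab
    exact Real.rpow_lt_rpow_of_neg ha.1 hab (by norm_num)
  exact this.injOn

lemma phiB_image : phiB '' (Ioo 0 1) = Ioi 1 := by
  apply Set.eq_of_subset_of_subset
  · rintro y ⟨v, hv, rfl⟩
    exact (Real.one_lt_rpow_iff_of_pos hv.1 (y := (-(1/3):ℝ))).mpr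
      (Or.inr ⟨hv.2, by norm_num⟩)
  · intro y hy
    have hy1 : (1:ℝ) < y := hy
    have hy0 : (0:ℝ) < y := by linarith
    refine ⟨y ^ (-(3:ℝ)), ⟨Real.rpow_pos_of_pos hy0 _,
      Real.rpow_lt_one_of_one_lt_of_neg hy1 (by norm_num)⟩, ?_⟩
    unfold phiB
    rw [← Real.rpow_mul hy0.le]
    norm_num

lemma phiB_deriv {v : ℝ} (hv : 0 < v) :
    HasDerivAt phiB (-(1/3) * v ^ (-(1/3) - 1 : ℝ)) v :=
  Real.hasDerivAt_rpow_const (Or.inl hv.ne')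

lemma pointwiseB {v : ℝ} (hv0 : 0 < v) (hv1 : v < 1) :
    |(-(1/3) * v ^ (-(1/3) - 1 : ℝ))| • GG (phiB v)
      = (1/3 : ℝ) * (v ^ ((1:ℝ)/6 - 1) * (1-v) ^ ((1:ℝ)/2 - 1)) := by
  have h1v : (0:ℝ) < 1 - v := by linarith
  have hp : (0:ℝ) < v ^ (-(1/3) - 1 : ℝ) := Real.rpow_pos_of_pos hv0 _
  rw [smul_eq_mul, abs_mul, abs_of_pos hp]
  unfold GG phiB
  have e1 : (v ^ (-(1/3) : ℝ)) ^ 3 = v ^ (-(1:ℝ)) := by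
    rw [← Real.rpow_natCast (v ^ (-(1/3):ℝ)) 3, ← Real.rpow_mul hv0.le]
    norm_num
  rw [e1, Real.rpow_neg_one]
  have e2 : v⁻¹ - 1 = (1-v)/v := by field_simp
  rw [e2, Real.div_rpow h1v.le hv0.le]
  have e5 : (1-v) ^ (-(1/2):ℝ) / v ^ (-(1/2):ℝ) = (1-v) ^ (-(1/2):ℝ) * v ^ ((1/2):ℝ) := by
    rw [Real.rpow_neg hv0.le]
    field_simp
  rw [e5]
  have e4 : v ^ (-(1/3) - 1 : ℝ) * v ^ ((1/2) : ℝ) = v ^ ((1:ℝ)/6 - 1) := by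
    rw [← Real.rpow_add hv0]
    norm_num
  have habs : |(-(1/3) : ℝ)| = 1/3 := by norm_num
  rw [habs]
  calc (1/3 : ℝ) * v ^ (-(1/3) - 1 : ℝ) * ((1-v) ^ (-(1/2):ℝ) * v ^ ((1/2) : ℝ))
      = (1/3 : ℝ) * ((v ^ (-(1/3) - 1 : ℝ) * v ^ ((1/2) : ℝ)) * (1-v) ^ (-(1/2):ℝ)) := by
        ring
    _ = (1/3 : ℝ) * (v ^ ((1:ℝ)/6 - 1) * (1-v) ^ ((1:ℝ)/2 - 1)) := by
        rw [e4]
        norm_num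

lemma stepB :
    ∫ x in Ioi (1:ℝ), GG x
      = (1/3 : ℝ) * ∫ v in Ioo (0:ℝ) 1, v ^ ((1:ℝ)/6 - 1) * (1-v) ^ ((1:ℝ)/2 - 1) := by
  rw [← phiB_image,
    integral_image_eq_integral_abs_deriv_smul measurableSet_Ioo
      (fun v hv => (phiB_deriv hv.1).hasDerivWithinAt) phiB_inj GG,
    ← integral_const_mul]
  exact setIntegral_congr_fun measurableSet_Ioo fun v hv => pointwiseB hv.1 hv.2

lemma real_beta {u v : ℝ} (hu : 0 < u) (hv : 0 < v) :
    Real.Gamma u * Real.Gamma v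
      = Real.Gamma (u+v) * ∫ x in (0:ℝ)..1, x ^ (u-1) * (1-x) ^ (v-1) := by
  have h := Complex.Gamma_mul_Gamma_eq_betaIntegral
    (s := (u:ℂ)) (t := (v:ℂ)) (by simpa using hu) (by simpa using hv)
  have hbeta : Complex.betaIntegral (u:ℂ) (v:ℂ)
      = ((∫ x in (0:ℝ)..1, x ^ (u-1) * (1-x) ^ (v-1) : ℝ) : ℂ) := by
    rw [Complex.betaIntegral, ← intervalIntegral.integral_ofReal]
    apply intervalIntegral.integral_congr
    intro x hx
    rw [Set.uIcc_of_le (by norm_num : (0:ℝ) ≤ 1)] at hx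
    have hx0 : 0 ≤ x := hx.1
    have hx1 : 0 ≤ 1 - x := by linarith [hx.2]
    show (x:ℂ) ^ ((u:ℂ) - 1) * ((1:ℂ) - (x:ℝ)) ^ ((v:ℂ) - 1)
        = ((x ^ (u-1) * (1-x) ^ (v-1) : ℝ) : ℂ)
    rw [show ((u:ℂ) - 1) = ((u - 1 : ℝ) : ℂ) by push_cast; ring,
        show ((v:ℂ) - 1) = ((v - 1 : ℝ) : ℂ) by push_cast; ring,
        show ((1:ℂ) - (x:ℝ)) = ((1 - x : ℝ) : ℂ) by push_cast; ring,
        ← Complex.ofReal_cpow hx0, ← Complex.ofReal_cpow hx1, ← Complex.ofReal_mul]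
  rw [hbeta, show ((u:ℂ) + (v:ℂ)) = ((u + v : ℝ) : ℂ) by push_cast; ring,
      Complex.Gamma_ofReal, Complex.Gamma_ofReal, Complex.Gamma_ofReal,
      ← Complex.ofReal_mul, ← Complex.ofReal_mul] at h
  exact_mod_cast h

lemma part1 :
    hyp2F1 (1/2) (1/2) 1 ((2 - Real.sqrt 3) / 4)
      = Real.Gamma (1/6) * Real.Gamma (1/3)
          / ((3:ℝ) ^ ((1:ℝ)/4) * 2 * Real.pi ^ ((3:ℝ)/2)) := by
  unfold hyp2F1
  rw [show (1 : ℝ) - 1/2 = 1/2 by norm_num, Real.Gamma_one, Real.Gamma_one_half_eq]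
  simp only [show (1/2 - 1 : ℝ) = -(1/2) by norm_num, show (1 - 1/2 - 1 : ℝ) = -(1/2) by norm_num]
  rw [intervalIntegral.integral_of_le zero_le_one, integral_Ioc_eq_integral_Ioo]
  set I : ℝ := ∫ t in Ioo (0:ℝ) 1,
      t ^ (-(1/2) : ℝ) * (1-t) ^ (-(1/2) : ℝ)
        * (1 - (2-Real.sqrt 3)/4 * t) ^ (-(1/2) : ℝ) with hI
  set B : ℝ := ∫ v in Ioo (0:ℝ) 1, v ^ ((1:ℝ)/6 - 1) * (1-v) ^ ((1:ℝ)/2 - 1) with hBdef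
  have hIB : (3:ℝ) ^ (-(1/4) : ℝ) * I = (1/3) * B := stepA.symm.trans stepB
  have hQpos : (0:ℝ) < (3:ℝ) ^ ((1:ℝ)/4) := Real.rpow_pos_of_pos (by norm_num) _
  have hQQ : (3:ℝ) ^ ((1:ℝ)/4) * (3:ℝ) ^ ((1:ℝ)/4) = Real.sqrt 3 := by
    rw [← Real.rpow_add (by norm_num), Real.sqrt_eq_rpow]; norm_num
  have hIval : I = (3:ℝ) ^ ((1:ℝ)/4) * ((1/3) * B) := by
    have h1 : (3:ℝ) ^ ((1:ℝ)/4) * ((3:ℝ) ^ (-(1/4) : ℝ) * I) = (3:ℝ) ^ ((1:ℝ)/4) * ((1/3)*B) := by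
      rw [hIB]
    rwa [← mul_assoc, ← Real.rpow_add (by norm_num), show (1:ℝ)/4 + -(1/4) = 0 by norm_num,
      Real.rpow_zero, one_mul] at h1
  have hBeta := real_beta (u := 1/6) (v := 1/2) (by norm_num) (by norm_num)
  rw [show (1/6 + 1/2 : ℝ) = 2/3 by norm_num, Real.Gamma_one_half_eq,
    intervalIntegral.integral_of_le zero_le_one, integral_Ioc_eq_integral_Ioo, ← hBdef] at hBeta
  have hrefl := Real.Gamma_mul_Gamma_one_sub (1/3)
  rw [show (1 : ℝ) - 1/3 = 2/3 by norm_num, show Real.pi * (1/3) = Real.pi/3 by ring,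
    Real.sin_pi_div_three] at hrefl
  have hG23 : (0:ℝ) < Real.Gamma (2/3) := Real.Gamma_pos_of_pos (by norm_num)
  have hPpos : (0:ℝ) < Real.sqrt Real.pi := Real.sqrt_pos.mpr Real.pi_pos
  have hPP : Real.sqrt Real.pi * Real.sqrt Real.pi = Real.pi := Real.mul_self_sqrt Real.pi_pos.le
  have hss : Real.sqrt 3 * Real.sqrt 3 = 3 := Real.mul_self_sqrt (by norm_num)
  have hspos : (0:ℝ) < Real.sqrt 3 := Real.sqrt_pos.mpr (by norm_num)
  have hP32 : Real.pi ^ ((3:ℝ)/2) = Real.pi * Real.sqrt Real.pi := by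
    rw [show (3:ℝ)/2 = 1 + 1/2 by norm_num, Real.rpow_add Real.pi_pos, Real.rpow_one,
      ← Real.sqrt_eq_rpow]
  rw [hIval, hP32]
  have hBval : B = Real.Gamma (1/6) * Real.sqrt Real.pi / Real.Gamma (2/3) := by
    rw [eq_div_iff hG23.ne']
    linear_combination -hBeta
  rw [hBval]
  rw [eq_div_iff (by positivity : (Real.sqrt 3 / 2 : ℝ) ≠ 0)] at hrefl
  have h13 : (0:ℝ) < Real.Gamma (1/3) := Real.Gamma_pos_of_pos (by norm_num)
  have hG23val : Real.Gamma (2/3) = 2 * Real.pi / (Real.sqrt 3 * Real.Gamma (1/3)) := by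
    rw [eq_div_iff (by positivity : (Real.sqrt 3 * Real.Gamma (1/3) : ℝ) ≠ 0)]
    linear_combination 2 * hrefl
  rw [hG23val]
  field_simp
  linear_combination (Real.sqrt 3) * hQQ + hss

theorem stmt15 :
    hyp2F1 (1/2) (1/2) 1 ((2 - Real.sqrt 3) / 4)
      = Real.Gamma (1/6) * Real.Gamma (1/3)
          / ((3:ℝ) ^ ((1:ℝ)/4) * 2 * Real.pi ^ ((3:ℝ)/2)) ∧
    (Real.pi / 2) *
        hyp2F1 (1/2) (1/2) 1 (((Real.sqrt 3 - 1) / (2 * Real.sqrt 2))^2)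
      = Real.Gamma (1/6) * Real.Gamma (1/3)
          / ((3:ℝ) ^ ((1:ℝ)/4) * 4 * Real.sqrt Real.pi) := by
  have harg : ((Real.sqrt 3 - 1) / (2 * Real.sqrt 2))^2 = (2 - Real.sqrt 3)/4 := by
    have h2 : Real.sqrt 2 ^ 2 = 2 := Real.sq_sqrt (by norm_num)
    have h2pos : (0:ℝ) < Real.sqrt 2 := Real.sqrt_pos.mpr (by norm_num)
    rw [div_pow, mul_pow, h2, div_eq_div_iff (by norm_num) (by norm_num)]
    linear_combination 4 * s3_sq
  refine ⟨part1, ?_⟩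
  rw [harg, part1]
  have hPpos : (0:ℝ) < Real.sqrt Real.pi := Real.sqrt_pos.mpr Real.pi_pos
  have hQpos : (0:ℝ) < (3:ℝ) ^ ((1:ℝ)/4) := Real.rpow_pos_of_pos (by norm_num) _
  have hP32 : Real.pi ^ ((3:ℝ)/2) = Real.pi * Real.sqrt Real.pi := by
    rw [show (3:ℝ)/2 = 1 + 1/2 by norm_num, Real.rpow_add Real.pi_pos, Real.rpow_one,
      ← Real.sqrt_eq_rpow]
  rw [hP32]
  have hpi := Real.pi_pos
  field_simp
  ring
end

section
/- Let H = {α₁, -1/ᾱ₁, α₂, -1/ᾱ₂, α₃, -1/ᾱ₃} ⊂ ℂ with all six points distinct and αᵢ ≠ 0, and let M be the Möbius transformation sending α₁ ↦ 0, α₂ ↦ 1, -1/ᾱ₁ ↦ ∞. Then Λ₁ := M(-1/ᾱ₂), Λ₂ := M(α₃), Λ₃ := M(-1/ᾱ₃) satisfy: Λ₁ is real and negative, and Λ₂·conj(Λ₃) = Λ₁. -/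
open Complex

lemma comb (A B C D u v : ℂ) (hu : u ≠ 0) (hv : v ≠ 0) (hB : B ≠ 0) (hD : D ≠ 0) :
    (A/u)/B * ((C/v)/(D/(u*v))) = (A*C)/(B*D) := by
  field_simp

/-- The Möbius transformation sending `a ↦ 0`, `b ↦ 1`, `c ↦ ∞`. -/
noncomputable def mob (a b c z : ℂ) : ℂ := ((b - c) / (b - a)) * ((z - a) / (z - c))

theorem stmt19 (α₁ α₂ α₃ : ℂ)
    (h₁ : α₁ ≠ 0) (h₂ : α₂ ≠ 0) (h₃ : α₃ ≠ 0)
    (hdist : Function.Injective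
      (![α₁, -1 / (starRingEnd ℂ α₁), α₂, -1 / (starRingEnd ℂ α₂),
         α₃, -1 / (starRingEnd ℂ α₃)] : Fin 6 → ℂ))
    (hd1 : α₁ - α₂ ≠ 0) (hd2 : 1 + starRingEnd ℂ α₁ * α₃ ≠ 0)
    (Λ₁ Λ₂ Λ₃ : ℂ)
    (hΛ₁ : Λ₁ = mob α₁ α₂ (-1 / starRingEnd ℂ α₁) (-1 / starRingEnd ℂ α₂))
    (hΛ₂ : Λ₂ = mob α₁ α₂ (-1 / starRingEnd ℂ α₁) α₃)
    (hΛ₃ : Λ₃ = mob α₁ α₂ (-1 / starRingEnd ℂ α₁) (-1 / starRingEnd ℂ α₃)) :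
    Λ₁.im = 0 ∧ Λ₁.re < 0 ∧ Λ₂ * starRingEnd ℂ Λ₃ = Λ₁ := by
  have hc1 : starRingEnd ℂ α₁ ≠ 0 := by simpa using h₁
  have hc2 : starRingEnd ℂ α₂ ≠ 0 := by simpa using h₂
  have hc3 : starRingEnd ℂ α₃ ≠ 0 := by simpa using h₃
  have h21 : α₂ ≠ -1 / starRingEnd ℂ α₁ := by
    have := hdist.ne (show (2:Fin 6) ≠ 1 by decide); simpa using this
  have h03 : α₁ ≠ -1 / starRingEnd ℂ α₂ := by
    have := hdist.ne (show (0:Fin 6) ≠ 3 by decide); simpa using this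
  have h04 : α₁ ≠ α₃ := by
    have := hdist.ne (show (0:Fin 6) ≠ 4 by decide); simpa using this
  have hc12 : starRingEnd ℂ α₁ - starRingEnd ℂ α₂ ≠ 0 := by
    intro h; exact hd1 (sub_eq_zero.mpr ((starRingEnd ℂ).injective (sub_eq_zero.mp h)))
  have n12 : 1 + starRingEnd ℂ α₁ * α₂ ≠ 0 := by
    intro h; apply h21; field_simp; linear_combination h
  have n21 : 1 + starRingEnd ℂ α₂ * α₁ ≠ 0 := by
    intro h; apply h03; field_simp; linear_combination h
  have h13s : α₁ - α₃ ≠ 0 := sub_ne_zero.mpr h04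
  have n31 : 1 + starRingEnd ℂ α₃ * α₁ ≠ 0 := by
    intro h; apply hd2
    have := congrArg (starRingEnd ℂ) h
    simp only [map_add, map_one, map_mul, Complex.conj_conj, map_zero] at this
    linear_combination this
  set c₁ := starRingEnd ℂ α₁ with hc₁d
  set c₂ := starRingEnd ℂ α₂ with hc₂d
  set c₃ := starRingEnd ℂ α₃ with hc₃d
  have hc13 : c₁ - c₃ ≠ 0 := by
    intro h; exact h13s (sub_eq_zero.mpr ((starRingEnd ℂ).injective (sub_eq_zero.mp h)))
  have n13' : 1 + c₁ * α₃ ≠ 0 := hd2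
  have h21s : α₂ - α₁ ≠ 0 := fun h => hd1 (by linear_combination -h)
  have f1 : α₂ - (-1/c₁) = (1 + c₁*α₂)/c₁ := by field_simp; ring
  have f2 : (-1/c₂ : ℂ) - α₁ = -(1 + c₂*α₁)/c₂ := by field_simp; ring
  have f3 : (-1/c₂ : ℂ) - (-1/c₁) = -(c₁ - c₂)/(c₁*c₂) := by field_simp; ring
  have f4 : α₃ - (-1/c₁) = (1 + c₁*α₃)/c₁ := by field_simp; ring
  have f5 : (-1/c₃ : ℂ) - α₁ = -(1 + c₃*α₁)/c₃ := by field_simp; ring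
  have f6 : (-1/c₃ : ℂ) - (-1/c₁) = -(c₁ - c₃)/(c₁*c₃) := by field_simp; ring
  have cc1 : starRingEnd ℂ c₁ = α₁ := by rw [hc₁d]; exact Complex.conj_conj α₁
  have cc2 : starRingEnd ℂ c₂ = α₂ := by rw [hc₂d]; exact Complex.conj_conj α₂
  have cc3 : starRingEnd ℂ c₃ = α₃ := by rw [hc₃d]; exact Complex.conj_conj α₃
  have key1 : Λ₁ = -((1 + c₁*α₂)*(1 + c₂*α₁))/((α₁ - α₂)*(c₁ - c₂)) := by
    rw [hΛ₁, mob, f1, f2, f3,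
      comb _ _ _ _ _ _ hc1 hc2 h21s (neg_ne_zero.mpr hc12),
      div_eq_div_iff (mul_ne_zero h21s (neg_ne_zero.mpr hc12)) (mul_ne_zero hd1 hc12)]
    ring
  have key2 : Λ₂ = ((α₁ - α₃)*(1 + c₁*α₂))/((α₁ - α₂)*(1 + c₁*α₃)) := by
    rw [hΛ₂, mob, f1, f4]
    field_simp [hc1, h21s, hd1, hd2, n13', h13s]
    ring
  have key3 : Λ₃ = -((1 + c₃*α₁)*(1 + c₁*α₂))/((c₁ - c₃)*(α₁ - α₂)) := by
    rw [hΛ₃, mob, f1, f5, f6,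
      comb _ _ _ _ _ _ hc1 hc3 h21s (neg_ne_zero.mpr hc13),
      div_eq_div_iff (mul_ne_zero h21s (neg_ne_zero.mpr hc13)) (mul_ne_zero hc13 hd1)]
    ring
  have hre : Λ₁ = ((-(Complex.normSq (1 + c₁*α₂)) / Complex.normSq (α₁ - α₂) : ℝ) : ℂ) := by
    rw [key1]
    rw [Complex.ofReal_div, Complex.ofReal_neg]
    rw [Complex.normSq_eq_conj_mul_self, Complex.normSq_eq_conj_mul_self]
    simp only [map_add, map_one, map_mul, map_sub, Complex.conj_conj, cc1, cc2, cc3]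
    rw [div_eq_div_iff (mul_ne_zero hd1 hc12) (mul_ne_zero hc12 hd1)]
    ring
  have hnum : 0 < Complex.normSq (1 + c₁*α₂) := by
    rw [Complex.normSq_pos]; intro h; exact n12 (by linear_combination h)
  have hden : 0 < Complex.normSq (α₁ - α₂) := by
    rw [Complex.normSq_pos]; exact hd1
  refine ⟨?_, ?_, ?_⟩
  · rw [hre]; simp
  · rw [hre]; simp only [Complex.ofReal_re]
    exact div_neg_of_neg_of_pos (neg_neg_iff_pos.mpr hnum) hden
  · rw [key1, key2, key3]
    simp only [map_neg, map_div₀, map_mul, map_add, map_one, map_sub, Complex.conj_conj, cc1, cc2, cc3]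
    rw [div_mul_div_comm, div_eq_div_iff (mul_ne_zero (mul_ne_zero hd1 hd2) (mul_ne_zero h13s hc12)) (mul_ne_zero hd1 hc12)]
    ring
end
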